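/- Let K ≥ 2, let p, p' : Fin K → ℝ be strictly positive priors, fix x with marginal density value P(x) > 0 and class-conditional likelihoods m : Fin K → ℝ≥0, and let ε ∈ [0, 1/2) be such that the posterior satisfies: there is a unique i* with (m i* * p i*) / Z = 1 - ε and (m i * p i)/Z ≤ ε for all i ≠ i*, where Z = ∑_i m i * p i. Let T : Fin K → ℝ with T j > 0 for all j and define the shifted prior p' j = T j * p j / C with C = ∑_j T j * p j. If ε < min over all i, j of T j / (T i + T j), then i* is also the unique maximizer of j ↦ m j * p' j. -/
import Mathlib


theorem bayes_label_invariant_under_label_shift (K : ℕ) (hK : 2 ≤ K)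
    (p p' : Fin K → ℝ) (hp : ∀ j, 0 < p j) (hp' : ∀ j, 0 < p' j)
    (Px : ℝ) (hPx : 0 < Px) (m : Fin K → NNReal)
    (Z : ℝ) (hZ : Z = ∑ i, (m i : ℝ) * p i)
    (ε : ℝ) (hε0 : 0 ≤ ε) (hεhalf : ε < 1 / 2)
    (istar : Fin K)
    (hconc : (m istar : ℝ) * p istar / Z = 1 - ε)
    (hrest : ∀ i, i ≠ istar → (m i : ℝ) * p i / Z ≤ ε)
    (T : Fin K → ℝ) (hT : ∀ j, 0 < T j)
    (C : ℝ) (hC : C = ∑ j, T j * p j)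
    (hshift : ∀ j, p' j = T j * p j / C)
    (hεbound : ∀ i j, ε < T j / (T i + T j)) :
    ∀ j, j ≠ istar → (m j : ℝ) * p' j < (m istar : ℝ) * p' istar := by
  have hKpos : 0 < K := by omega
  have : Nonempty (Fin K) := ⟨⟨0, hKpos⟩⟩
  have hZnonneg : 0 ≤ Z := by
    rw [hZ]
    exact Finset.sum_nonneg fun i _ => mul_nonneg (m i).coe_nonneg (hp i).le
  have hZpos : 0 < Z := by
    rcases hZnonneg.lt_or_eq with h | h
    · exact h
    · exfalso
      rw [← h, div_zero] at hconc
      linarith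
  have hCpos : 0 < C := by
    rw [hC]
    exact Finset.sum_pos (fun j _ => mul_pos (hT j) (hp j)) Finset.univ_nonempty
  intro j hj
  rw [hshift j, hshift istar]
  have hmj : (m j : ℝ) * p j ≤ ε * Z := by
    have := hrest j hj
    rw [div_le_iff₀ hZpos] at this
    linarith
  have hmi : (m istar : ℝ) * p istar = (1 - ε) * Z := by
    field_simp at hconc
    linarith
  have hεT : ε * T j < (1 - ε) * T istar := by
    have h := hεbound j istar
    rw [lt_div_iff₀ (add_pos (hT j) (hT istar))] at h
    nlinarith
  have lhs : (m j : ℝ) * (T j * p j / C) = T j * ((m j : ℝ) * p j) / C := by ring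
  have rhs : (m istar : ℝ) * (T istar * p istar / C) = T istar * ((m istar : ℝ) * p istar) / C := by
    ring
  rw [lhs, rhs, div_lt_div_iff₀ hCpos hCpos]
  have h1 : T j * ((m j : ℝ) * p j) ≤ T j * (ε * Z) :=
    mul_le_mul_of_nonneg_left hmj (hT j).le
  rw [hmi]
  nlinarith [hT j, hT istar, hZpos, hCpos, mul_pos hZpos hCpos, mul_lt_mul_of_pos_right (mul_lt_mul_of_pos_right hεT hZpos) hCpos, mul_le_mul_of_nonneg_right h1 hCpos.le]
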